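/- For the KMV estimator: if the (k+1)-st smallest of n_A i.i.d. Uniform(0,1) random variables is M, then E[k/M] = n_A and Var(k/M) = (n_A² − k·n_A)/(k−1) < n_A²/(k−1), for 2 ≤ k+1 ≤ n_A. -/

import Mathlib

open MeasureTheory

lemma beta_nat (a b : ℕ) : ∫ x in (0:ℝ)..1, x ^ a * (1 - x) ^ b =
    (a.factorial * b.factorial : ℝ) / (a + b + 1).factorial := by
  induction b generalizing a with
  | zero =>
    simp only [pow_zero, mul_one, _root_.integral_pow, one_pow, Nat.factorial_zero,
      Nat.add_zero, Nat.cast_one]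
    rw [Nat.factorial_succ]
    push_cast
    field_simp
    simp
  | succ b ih =>
    have hu : ∀ x ∈ Set.uIcc (0:ℝ) 1, HasDerivAt (fun x : ℝ => (1 - x) ^ (b + 1))
        (-(((b:ℝ)+1) * (1 - x) ^ b)) x := by
      intro x _
      have h : HasDerivAt (fun x : ℝ => 1 - x) (-1) x := by
        simpa using (hasDerivAt_id x).const_sub 1
      have := h.fun_pow (b+1)
      simpa [mul_comm, mul_assoc, mul_left_comm] using this
    have hv : ∀ x ∈ Set.uIcc (0:ℝ) 1, HasDerivAt (fun x : ℝ => x ^ (a+1) / ((a:ℝ)+1))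
        (x ^ a) x := by
      intro x _
      have := (hasDerivAt_pow (a+1) x).div_const ((a:ℝ)+1)
      have hne : ((a:ℝ)+1) ≠ 0 := Nat.cast_add_one_ne_zero a
      simpa [Nat.add_sub_cancel, mul_div_assoc, mul_comm, mul_div_cancel_left₀, hne] using this
    have hcont1 : Continuous fun x : ℝ => -(((b:ℝ)+1) * (1 - x) ^ b) :=
      (continuous_const.mul ((continuous_const.sub continuous_id).pow b)).neg
    have hcont2 : Continuous fun x : ℝ => x ^ a := continuous_pow a
    have hparts := _root_.intervalIntegral.integral_mul_deriv_eq_deriv_mul hu hv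
      (hcont1.intervalIntegrable 0 1) (hcont2.intervalIntegrable 0 1)
    have key : ∫ x in (0:ℝ)..1, x ^ a * (1 - x) ^ (b+1)
        = ((b:ℝ)+1)/((a:ℝ)+1) * ∫ x in (0:ℝ)..1, x ^ (a+1) * (1 - x) ^ b := by
      rw [_root_.intervalIntegral.integral_congr (g := fun x : ℝ => (1-x)^(b+1) * x ^ a)
        (fun x _ => by ring)]
      rw [hparts]
      rw [← _root_.intervalIntegral.integral_const_mul]
      have hne : ((a:ℝ)+1) ≠ 0 := Nat.cast_add_one_ne_zero a
      have heq : ∀ x : ℝ, -(((b:ℝ)+1) * (1 - x) ^ b) * (x ^ (a+1) / ((a:ℝ)+1))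
          = -(((b:ℝ)+1)/((a:ℝ)+1) * (x ^ (a+1) * (1 - x) ^ b)) := by
        intro x; ring
      simp only [heq, _root_.intervalIntegral.integral_neg]
      rw [zero_pow (Nat.succ_ne_zero a)]
      norm_num
    rw [key, ih (a+1)]
    have h1 : ((a:ℝ)+1) ≠ 0 := Nat.cast_add_one_ne_zero a
    have h2 : (a+1+b+1 : ℕ) = a + (b+1) + 1 := by ring
    rw [h2]
    rw [Nat.factorial_succ a, Nat.factorial_succ b]
    push_cast
    have h3 : ((a + (b+1) + 1).factorial : ℝ) ≠ 0 := Nat.cast_ne_zero.mpr (Nat.factorial_ne_zero _)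
    field_simp

lemma beta_nat_Ioo (a b : ℕ) : ∫ x in Set.Ioo (0:ℝ) 1, x ^ a * (1 - x) ^ b =
    (a.factorial * b.factorial : ℝ) / (a + b + 1).factorial := by
  rw [← integral_Ioc_eq_integral_Ioo, ← _root_.intervalIntegral.integral_of_le zero_le_one,
    beta_nat]

/-- KMV estimator: if `M` is the `(k+1)`-st smallest of `n` i.i.d. uniforms on
`(0,1)` — so `M ~ Beta(k+1, n−k)` with density
`C·x^k·(1−x)^(n−k−1)` where `C = n!/(k!·(n−k−1)!)` — then `E[k/M] = n` and
`Var(k/M) = (n² − k·n)/(k−1) < n²/(k−1)`, for `2 ≤ k` and `k+1 ≤ n`. -/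
theorem stmt12 (k n : ℕ) (hk : 2 ≤ k) (hn : k + 1 ≤ n) :
    (∫ x in Set.Ioo (0:ℝ) 1,
        ((k : ℝ) / x) *
          ((n.factorial : ℝ) / (k.factorial * (n - k - 1).factorial)
            * x ^ k * (1 - x) ^ (n - k - 1)) = n) ∧
    ((∫ x in Set.Ioo (0:ℝ) 1,
        ((k : ℝ) / x) ^ 2 *
          ((n.factorial : ℝ) / (k.factorial * (n - k - 1).factorial)
            * x ^ k * (1 - x) ^ (n - k - 1))) - (n : ℝ) ^ 2
      = ((n : ℝ) ^ 2 - k * n) / (k - 1)) ∧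
    ((n : ℝ) ^ 2 - k * n) / (k - 1) < (n : ℝ) ^ 2 / (k - 1) := by
  obtain ⟨m, rfl⟩ : ∃ m, n = k + 1 + m := ⟨n - (k+1), by omega⟩
  obtain ⟨j, rfl⟩ : ∃ j, k = j + 2 := ⟨k - 2, by omega⟩
  set k := j + 2 with hkdef
  have hm : k + 1 + m - k - 1 = m := by omega
  rw [hm]
  set C : ℝ := ((k+1+m).factorial : ℝ) / (k.factorial * m.factorial) with hC
  have hk0 : (k:ℝ) ≠ 0 := by positivity
  have hkR : (k:ℝ) = (j:ℝ) + 2 := by push_cast [hkdef]; ring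
  have hj1 : ((j:ℝ)+1) ≠ 0 := by positivity
  have hd : ((j:ℝ)+2-1) ≠ 0 := by
    have := (Nat.cast_nonneg j : (0:ℝ) ≤ j); intro h; linarith
  have hkpos : (0:ℝ) < (k:ℝ) - 1 := by
    rw [hkR]; have := (Nat.cast_nonneg j : (0:ℝ) ≤ j); linarith
  have hk1 : (k:ℝ) - 1 ≠ 0 := ne_of_gt hkpos
  have hfacC : (k.factorial : ℝ) = ((j:ℝ)+2) * ((j:ℝ)+1) * j.factorial := by
    rw [hkdef]
    show ((j+1+1).factorial : ℝ) = _
    rw [Nat.factorial_succ, Nat.factorial_succ]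
    push_cast; ring
  have hjm : (m.factorial : ℝ) ≠ 0 := Nat.cast_ne_zero.mpr (Nat.factorial_ne_zero _)
  have hjf : (j.factorial : ℝ) ≠ 0 := Nat.cast_ne_zero.mpr (Nat.factorial_ne_zero _)
  -- first moment
  have hfst : ∫ x in Set.Ioo (0:ℝ) 1,
      ((k : ℝ) / x) * (C * x ^ k * (1 - x) ^ m) = ((k : ℝ) + 1 + m) := by
    have hcongr : ∫ x in Set.Ioo (0:ℝ) 1,
        ((k : ℝ) / x) * (C * x ^ k * (1 - x) ^ m)
        = ∫ x in Set.Ioo (0:ℝ) 1, (C * k) * (x ^ (j+1) * (1 - x) ^ m) := by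
      apply setIntegral_congr_fun measurableSet_Ioo
      intro x hx
      have hx0 : x ≠ 0 := ne_of_gt hx.1
      have hpow : x ^ k = x * x ^ (j+1) := by rw [← pow_succ']
      field_simp [hpow]
      ring
    rw [hcongr, integral_const_mul, beta_nat_Ioo]
    have he : j + 1 + m + 1 = k + m := by omega
    rw [he, hC]
    have hfac1 : ((k+1+m).factorial : ℝ) = ((k:ℝ)+1+m) * (k+m).factorial := by
      have h : k+1+m = (k+m)+1 := by omega
      rw [h, Nat.factorial_succ]; push_cast; ring
    have hfac2 : ((j+1).factorial : ℝ) = ((j:ℝ)+1) * j.factorial := by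
      rw [Nat.factorial_succ]; push_cast; ring
    have h3 : ((k+m).factorial : ℝ) ≠ 0 := Nat.cast_ne_zero.mpr (Nat.factorial_ne_zero _)
    rw [hfac1, hfacC, hfac2, hkR]
    field_simp
  -- second moment
  have hsnd : ∫ x in Set.Ioo (0:ℝ) 1,
      ((k : ℝ) / x) ^ 2 * (C * x ^ k * (1 - x) ^ m)
      = (k : ℝ) * ((k:ℝ)+1+m) * ((k:ℝ)+m) / ((k:ℝ) - 1) := by
    have hcongr : ∫ x in Set.Ioo (0:ℝ) 1,
        ((k : ℝ) / x) ^ 2 * (C * x ^ k * (1 - x) ^ m)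
        = ∫ x in Set.Ioo (0:ℝ) 1, (C * (k:ℝ)^2) * (x ^ j * (1 - x) ^ m) := by
      apply setIntegral_congr_fun measurableSet_Ioo
      intro x hx
      have hx0 : x ≠ 0 := ne_of_gt hx.1
      have hpow : x ^ k = x ^ 2 * x ^ j := by rw [← pow_add]; rw [hkdef]; ring_nf
      field_simp [hpow]
      ring
    rw [hcongr, integral_const_mul, beta_nat_Ioo]
    have he : j + m + 1 = k + m - 1 := by omega
    rw [hC]
    have hfac1 : ((k+1+m).factorial : ℝ) = ((k:ℝ)+1+m) * ((k:ℝ)+m) * (j+m+1).factorial := by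
      have h : k+1+m = ((j+m+1)+1)+1 := by omega
      rw [h, Nat.factorial_succ, Nat.factorial_succ]
      push_cast [hkR]; ring
    have h3 : ((j+m+1).factorial : ℝ) ≠ 0 := Nat.cast_ne_zero.mpr (Nat.factorial_ne_zero _)
    rw [hfac1, hfacC, hkR]
    field_simp [hd]
    ring
  have hmn : (↑(k+1+m) : ℝ) = (k:ℝ) + 1 + m := by push_cast; ring
  refine ⟨?_, ?_, ?_⟩
  · rw [← hC] at *
    rw [hfst, hmn]
  · rw [← hC] at *
    rw [hsnd, hmn, hkR]
    field_simp [hd]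
    ring
  · have hc : (0:ℝ) < (k:ℝ) - 1 := by
      rw [hkR]; have := (Nat.cast_nonneg j : (0:ℝ) ≤ j); linarith
    rw [div_lt_div_iff_of_pos_right hc]
    have hpos : (0:ℝ) < (k:ℝ) * ((k:ℝ)+1+m) := by rw [hkR]; positivity
    have : (0:ℝ) < (k:ℝ) * (↑(k+1+m):ℝ) := by rw [hmn]; exact hpos
    linarith
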